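/- Among the family p_ℓ(x,y) = e^{-(x+y)}(x+y)^ℓ/(ℓ+1)! for nonnegative integers ℓ, the only member satisfying E(XY) = E(X)E(Y) is ℓ = 0, and p_0(x,y) = e^{-x}e^{-y} has product structure, so X and Y are independent. -/

import Mathlib

open MeasureTheory Real Set

private lemma fact_int (n : ℕ) :
    ∫ y in Ioi (0:ℝ), y ^ n * Real.exp (-y) = (Nat.factorial n : ℝ) := by
  have h := Real.Gamma_eq_integral (show (0:ℝ) < n + 1 by positivity)
  rw [Real.Gamma_nat_eq_factorial] at h
  rw [h]
  refine setIntegral_congr_fun measurableSet_Ioi fun x hx => ?_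
  rw [show ((n : ℝ) + 1) - 1 = (n : ℝ) by ring,
    Real.rpow_natCast]
  ring

private lemma fact_integrable (n : ℕ) :
    IntegrableOn (fun y : ℝ => y ^ n * Real.exp (-y)) (Ioi 0) := by
  have h := Real.GammaIntegral_convergent (show (0:ℝ) < n + 1 by positivity)
  refine h.congr_fun ?_ measurableSet_Ioi
  intro x hx
  dsimp only
  rw [show ((n:ℝ) + 1) - 1 = (n : ℝ) by ring, Real.rpow_natCast]
  ring

private lemma moment (a b ℓ : ℕ) :
    (∫ x in Ioi (0:ℝ), ∫ y in Ioi (0:ℝ),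
        x ^ a * y ^ b * (Real.exp (-(x+y)) * (x+y) ^ ℓ))
      = ∑ k ∈ Finset.range (ℓ+1),
          (ℓ.choose k : ℝ) * Nat.factorial (a+k) * Nat.factorial (b+(ℓ-k)) := by
  have inner : ∀ x : ℝ, (∫ y in Ioi (0:ℝ), x ^ a * y ^ b * (Real.exp (-(x+y)) * (x+y) ^ ℓ))
      = ∑ k ∈ Finset.range (ℓ+1),
          ((ℓ.choose k : ℝ) * Nat.factorial (b+(ℓ-k))) * (x ^ (a+k) * Real.exp (-x)) := by
    intro x
    have hint : ∀ y : ℝ, x ^ a * y ^ b * (Real.exp (-(x+y)) * (x+y) ^ ℓ)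
        = ∑ k ∈ Finset.range (ℓ+1),
            ((ℓ.choose k : ℝ) * (x ^ (a+k) * Real.exp (-x))) * (y ^ (b+(ℓ-k)) * Real.exp (-y)) := by
      intro y
      rw [add_pow, neg_add, Real.exp_add, Finset.mul_sum, Finset.mul_sum]
      refine Finset.sum_congr rfl fun k hk => ?_
      rw [pow_add, pow_add]
      ring
    simp_rw [hint]
    rw [integral_finset_sum _ (fun k _ => ((fact_integrable (b+(ℓ-k))).const_mul _))]
    refine Finset.sum_congr rfl fun k hk => ?_
    rw [MeasureTheory.integral_const_mul, fact_int]
    ring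
  rw [setIntegral_congr_fun measurableSet_Ioi (fun x _ => inner x)]
  rw [integral_finset_sum _ (fun k _ => ((fact_integrable (a+k)).const_mul _))]
  refine Finset.sum_congr rfl fun k hk => ?_
  rw [MeasureTheory.integral_const_mul, fact_int]
  ring

private lemma S2 (ℓ : ℕ) : (∑ k ∈ Finset.range (ℓ+1), (k+1)) * 2 = (ℓ+1)*(ℓ+2) := by
  induction ℓ with
  | zero => rfl
  | succ n ih =>
    rw [Finset.sum_range_succ, add_mul, ih]
    ring

private lemma T6 (ℓ : ℕ) : (∑ k ∈ Finset.range (ℓ+1), (k+1)*(ℓ-k+1)) * 6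
    = (ℓ+1)*(ℓ+2)*(ℓ+3) := by
  induction ℓ with
  | zero => rfl
  | succ n ih =>
    rw [Finset.sum_range_succ]
    have h1 : ∀ k ∈ Finset.range (n+1), (k+1)*(n+1-k+1) = (k+1)*(n-k+1) + (k+1) := by
      intro k hk
      have : k ≤ n := by simpa [Nat.lt_succ_iff] using hk
      have : n + 1 - k = (n - k) + 1 := by omega
      rw [this]; ring
    rw [Finset.sum_congr rfl h1, Finset.sum_add_distrib, Nat.sub_self]
    have h2 := S2 n
    ring_nf at ih h2 ⊢
    linarith [ih, h2]

private lemma sum10 (ℓ : ℕ) :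
    (∑ k ∈ Finset.range (ℓ+1), ℓ.choose k * Nat.factorial (1+k) * Nat.factorial (0+(ℓ-k))) * 2
      = Nat.factorial (ℓ+2) := by
  have h1 : ∀ k ∈ Finset.range (ℓ+1),
      ℓ.choose k * Nat.factorial (1+k) * Nat.factorial (0+(ℓ-k)) = (k+1) * Nat.factorial ℓ := by
    intro k hk
    have hkℓ : k ≤ ℓ := by simpa [Nat.lt_succ_iff] using hk
    have := Nat.choose_mul_factorial_mul_factorial hkℓ
    rw [show 1 + k = k + 1 from by omega, Nat.factorial_succ, Nat.zero_add]
    calc ℓ.choose k * ((k+1) * Nat.factorial k) * Nat.factorial (ℓ-k)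
        = (k+1) * (ℓ.choose k * Nat.factorial k * Nat.factorial (ℓ-k)) := by ring
      _ = (k+1) * Nat.factorial ℓ := by rw [this]
  rw [Finset.sum_congr rfl h1, ← Finset.sum_mul]
  have := S2 ℓ
  rw [show Nat.factorial (ℓ+2) = (ℓ+2)*((ℓ+1)*Nat.factorial ℓ) from by
    rw [Nat.factorial_succ, Nat.factorial_succ]]
  nlinarith [S2 ℓ]

private lemma sum01 (ℓ : ℕ) :
    (∑ k ∈ Finset.range (ℓ+1), ℓ.choose k * Nat.factorial (0+k) * Nat.factorial (1+(ℓ-k))) * 2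
      = Nat.factorial (ℓ+2) := by
  have h1 : ∀ k ∈ Finset.range (ℓ+1),
      ℓ.choose k * Nat.factorial (0+k) * Nat.factorial (1+(ℓ-k)) = (ℓ-k+1) * Nat.factorial ℓ := by
    intro k hk
    have hkℓ : k ≤ ℓ := by simpa [Nat.lt_succ_iff] using hk
    have := Nat.choose_mul_factorial_mul_factorial hkℓ
    rw [show 1 + (ℓ-k) = (ℓ-k) + 1 from by omega, Nat.factorial_succ, Nat.zero_add]
    calc ℓ.choose k * Nat.factorial k * ((ℓ-k+1) * Nat.factorial (ℓ-k))
        = (ℓ-k+1) * (ℓ.choose k * Nat.factorial k * Nat.factorial (ℓ-k)) := by ring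
      _ = (ℓ-k+1) * Nat.factorial ℓ := by rw [this]
  rw [Finset.sum_congr rfl h1, ← Finset.sum_mul]
  have hre : ∑ k ∈ Finset.range (ℓ+1), (ℓ-k+1) = ∑ k ∈ Finset.range (ℓ+1), (k+1) := by
    rw [← Finset.sum_range_reflect]
    refine Finset.sum_congr rfl fun k hk => ?_
    have : k ≤ ℓ := by simpa [Nat.lt_succ_iff] using hk
    omega
  rw [hre]
  rw [show Nat.factorial (ℓ+2) = (ℓ+2)*((ℓ+1)*Nat.factorial ℓ) from by
    rw [Nat.factorial_succ, Nat.factorial_succ]]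
  nlinarith [S2 ℓ]

private lemma sum11 (ℓ : ℕ) :
    (∑ k ∈ Finset.range (ℓ+1), ℓ.choose k * Nat.factorial (1+k) * Nat.factorial (1+(ℓ-k))) * 6
      = Nat.factorial (ℓ+3) := by
  have h1 : ∀ k ∈ Finset.range (ℓ+1),
      ℓ.choose k * Nat.factorial (1+k) * Nat.factorial (1+(ℓ-k))
        = ((k+1)*(ℓ-k+1)) * Nat.factorial ℓ := by
    intro k hk
    have hkℓ : k ≤ ℓ := by simpa [Nat.lt_succ_iff] using hk
    have := Nat.choose_mul_factorial_mul_factorial hkℓ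
    rw [show 1 + k = k + 1 from by omega, show 1 + (ℓ-k) = (ℓ-k) + 1 from by omega,
      Nat.factorial_succ, Nat.factorial_succ]
    calc ℓ.choose k * ((k+1) * Nat.factorial k) * ((ℓ-k+1) * Nat.factorial (ℓ-k))
        = ((k+1)*(ℓ-k+1)) * (ℓ.choose k * Nat.factorial k * Nat.factorial (ℓ-k)) := by ring
      _ = ((k+1)*(ℓ-k+1)) * Nat.factorial ℓ := by rw [this]
  rw [Finset.sum_congr rfl h1, ← Finset.sum_mul]
  rw [show Nat.factorial (ℓ+3) = (ℓ+3)*((ℓ+2)*((ℓ+1)*Nat.factorial ℓ)) from by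
    rw [Nat.factorial_succ, Nat.factorial_succ, Nat.factorial_succ]]
  nlinarith [T6 ℓ]

theorem parameter_collapse_first_example
    (p : ℕ → ℝ → ℝ → ℝ)
    (hp : ∀ n x y, p n x y = Real.exp (-(x + y)) * (x + y) ^ n / Nat.factorial (n + 1)) :
    (∀ ℓ : ℕ,
      ((∫ x in Ioi (0:ℝ), ∫ y in Ioi (0:ℝ), x * y * p ℓ x y) =
          (∫ x in Ioi (0:ℝ), ∫ y in Ioi (0:ℝ), x * p ℓ x y) *
          (∫ x in Ioi (0:ℝ), ∫ y in Ioi (0:ℝ), y * p ℓ x y)) ↔ ℓ = 0) ∧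
    (∀ x y : ℝ, p 0 x y = Real.exp (-x) * Real.exp (-y)) := by
  constructor
  · intro ℓ
    set c : ℝ := (Nat.factorial (ℓ+1) : ℝ) with hcdef
    have hcpos : (0:ℝ) < c := by positivity
    have hc0 : c ≠ 0 := ne_of_gt hcpos
    set L : ℝ := (ℓ : ℝ) with hLdef
    -- the three moment computations
    have e11 : ∀ x y : ℝ, x * y * p ℓ x y
        = (x ^ 1 * y ^ 1 * (Real.exp (-(x+y)) * (x+y) ^ ℓ)) * c⁻¹ := by
      intro x y; rw [hp]; ring
    have e10 : ∀ x y : ℝ, x * p ℓ x y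
        = (x ^ 1 * y ^ 0 * (Real.exp (-(x+y)) * (x+y) ^ ℓ)) * c⁻¹ := by
      intro x y; rw [hp]; ring
    have e01 : ∀ x y : ℝ, y * p ℓ x y
        = (x ^ 0 * y ^ 1 * (Real.exp (-(x+y)) * (x+y) ^ ℓ)) * c⁻¹ := by
      intro x y; rw [hp]; ring
    have h11 : (∫ x in Ioi (0:ℝ), ∫ y in Ioi (0:ℝ), x * y * p ℓ x y)
        = ((∑ k ∈ Finset.range (ℓ+1),
            ℓ.choose k * Nat.factorial (1+k) * Nat.factorial (1+(ℓ-k)) : ℕ) : ℝ) * c⁻¹ := by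
      simp_rw [e11, MeasureTheory.integral_mul_const]
      rw [moment]; push_cast; ring
    have h10 : (∫ x in Ioi (0:ℝ), ∫ y in Ioi (0:ℝ), x * p ℓ x y)
        = ((∑ k ∈ Finset.range (ℓ+1),
            ℓ.choose k * Nat.factorial (1+k) * Nat.factorial (0+(ℓ-k)) : ℕ) : ℝ) * c⁻¹ := by
      simp_rw [e10, MeasureTheory.integral_mul_const]
      rw [moment]; push_cast; ring
    have h01 : (∫ x in Ioi (0:ℝ), ∫ y in Ioi (0:ℝ), y * p ℓ x y)
        = ((∑ k ∈ Finset.range (ℓ+1),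
            ℓ.choose k * Nat.factorial (0+k) * Nat.factorial (1+(ℓ-k)) : ℕ) : ℝ) * c⁻¹ := by
      simp_rw [e01, MeasureTheory.integral_mul_const]
      rw [moment]; push_cast; ring
    -- values of the sums
    have f2 : ((Nat.factorial (ℓ+2) : ℕ) : ℝ) = (L+2) * c := by
      rw [Nat.factorial_succ]; push_cast; ring
    have f3 : ((Nat.factorial (ℓ+3) : ℕ) : ℝ) = (L+3) * ((L+2) * c) := by
      rw [Nat.factorial_succ, Nat.factorial_succ]; push_cast; ring
    have hA : ((∑ k ∈ Finset.range (ℓ+1),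
        ℓ.choose k * Nat.factorial (1+k) * Nat.factorial (1+(ℓ-k)) : ℕ) : ℝ)
          = (L+3)*(L+2)*c/6 := by
      have := sum11 ℓ
      have h6 : ((∑ k ∈ Finset.range (ℓ+1),
          ℓ.choose k * Nat.factorial (1+k) * Nat.factorial (1+(ℓ-k)) : ℕ) : ℝ) * 6
            = ((Nat.factorial (ℓ+3) : ℕ) : ℝ) := by exact_mod_cast congrArg (Nat.cast (R := ℝ)) this
      rw [f3] at h6; linarith
    have hB : ((∑ k ∈ Finset.range (ℓ+1),
        ℓ.choose k * Nat.factorial (1+k) * Nat.factorial (0+(ℓ-k)) : ℕ) : ℝ)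
          = (L+2)*c/2 := by
      have := sum10 ℓ
      have h2 : ((∑ k ∈ Finset.range (ℓ+1),
          ℓ.choose k * Nat.factorial (1+k) * Nat.factorial (0+(ℓ-k)) : ℕ) : ℝ) * 2
            = ((Nat.factorial (ℓ+2) : ℕ) : ℝ) := by exact_mod_cast congrArg (Nat.cast (R := ℝ)) this
      rw [f2] at h2; linarith
    have hC : ((∑ k ∈ Finset.range (ℓ+1),
        ℓ.choose k * Nat.factorial (0+k) * Nat.factorial (1+(ℓ-k)) : ℕ) : ℝ)
          = (L+2)*c/2 := by
      have := sum01 ℓ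
      have h2 : ((∑ k ∈ Finset.range (ℓ+1),
          ℓ.choose k * Nat.factorial (0+k) * Nat.factorial (1+(ℓ-k)) : ℕ) : ℝ) * 2
            = ((Nat.factorial (ℓ+2) : ℕ) : ℝ) := by exact_mod_cast congrArg (Nat.cast (R := ℝ)) this
      rw [f2] at h2; linarith
    rw [h11, h10, h01, hA, hB, hC]
    constructor
    · intro h
      have hL0 : L ≥ 0 := by simp [hLdef]
      have hpoly : L * (L + 2) = 0 := by
        field_simp at h
        have key : (L * (L + 2)) * (2*c^3) = 0 := by linear_combination (-(c^3)*(L+2)) * h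
        rcases mul_eq_zero.1 key with h' | h'
        · exact h'
        · exact absurd h' (by positivity)
      have hL : L = 0 := by nlinarith [hL0, hpoly]
      rw [hLdef] at hL
      exact_mod_cast hL
    · intro h
      subst h
      simp only [hLdef, hcdef]
      norm_num [Nat.factorial]
  · intro x y
    rw [hp]
    rw [neg_add, Real.exp_add]
    norm_num
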